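/- Let f : ℝ → ℝ be continuously differentiable on (a, b), and suppose there are n > 1 points a < x₁ < x₂ < ... < xₙ < b with f(x₁) = ... = f(xₙ) = c and f'(xᵢ) < 0 for all i. Then there exist at least n − 1 additional points y₁ < ... < y_{n−1} in (a, b), each distinct from all xᵢ, with f(yⱼ) = c and f'(yⱼ) ≥ 0 for each j. -/

import Mathlib

open Set Filter Topology

lemma slope_neg_right {f : ℝ → ℝ} {d p : ℝ} (h : HasDerivAt f d p) (hd : d < 0) :
    ∀ᶠ t in 𝓝[>] p, f t < f p := by
  have h' := hasDerivAt_iff_tendsto_slope.1 h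
  have h2 : ∀ᶠ t in 𝓝[≠] p, slope f p t < 0 := h'.eventually_lt_const hd
  have h3 : ∀ᶠ t in 𝓝[>] p, slope f p t < 0 :=
    h2.filter_mono (nhdsWithin_mono p (fun t ht => ne_of_gt ht))
  filter_upwards [h3, self_mem_nhdsWithin] with t ht ht'
  have ht' : (p : ℝ) < t := ht'
  rw [slope_def_field] at ht
  have := div_neg_iff.1 ht
  rcases this with ⟨h1, h2⟩ | ⟨h1, h2⟩
  · linarith
  · linarith

lemma slope_pos_left {f : ℝ → ℝ} {d q : ℝ} (h : HasDerivAt f d q) (hd : d < 0) :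
    ∀ᶠ t in 𝓝[<] q, f q < f t := by
  have h' := hasDerivAt_iff_tendsto_slope.1 h
  have h2 : ∀ᶠ t in 𝓝[≠] q, slope f q t < 0 := h'.eventually_lt_const hd
  have h3 : ∀ᶠ t in 𝓝[<] q, slope f q t < 0 :=
    h2.filter_mono (nhdsWithin_mono q (fun t ht => ne_of_lt ht))
  filter_upwards [h3, self_mem_nhdsWithin] with t ht ht'
  have ht' : t < q := ht'
  rw [slope_def_field] at ht
  have := div_neg_iff.1 ht
  rcases this with ⟨h1, h2⟩ | ⟨h1, h2⟩
  · linarith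
  · linarith

lemma key {f f' : ℝ → ℝ} {a b c p q : ℝ}
    (hderiv : ∀ t ∈ Set.Ioo a b, HasDerivAt f (f' t) t)
    (hp : p ∈ Set.Ioo a b) (hq : q ∈ Set.Ioo a b) (hpq : p < q)
    (hfp : f p = c) (hfq : f q = c) (hp' : f' p < 0) (hq' : f' q < 0) :
    ∃ y ∈ Set.Ioo p q, f y = c ∧ 0 ≤ f' y := by
  have hcf : ∀ s ⊆ Set.Ioo a b, ContinuousOn f s := fun s hs t ht =>
    ((hderiv t (hs ht)).continuousAt).continuousWithinAt
  have hsub : Set.Icc p q ⊆ Set.Ioo a b := fun t ht =>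
    ⟨lt_of_lt_of_le hp.1 ht.1, lt_of_le_of_lt ht.2 hq.2⟩
  -- right of p: f < c on some Ioo p u
  have hA : {t | f t < c} ∈ 𝓝[>] p := by
    have := slope_neg_right (hderiv p hp) hp'
    rw [hfp] at this; exact this
  obtain ⟨u, hu, huS⟩ := mem_nhdsGT_iff_exists_Ioo_subset.1 hA
  have hu : p < u := hu
  -- left of q : f > c on some Ioo l q
  have hB : {t | c < f t} ∈ 𝓝[<] q := by
    have := slope_pos_left (hderiv q hq) hq'
    rw [hfq] at this; exact this
  obtain ⟨l, hl, hlS⟩ := mem_nhdsLT_iff_exists_Ioo_subset.1 hB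
  have hl : l < q := hl
  set t₁ : ℝ := (p + min u q) / 2 with ht₁def
  have hmin : p < min u q := lt_min hu hpq
  have ht₁p : p < t₁ := by rw [ht₁def]; linarith
  have ht₁u : t₁ < min u q := by rw [ht₁def]; linarith
  have ht₁q : t₁ < q := lt_of_lt_of_le ht₁u (min_le_right _ _)
  have hft₁ : f t₁ < c := huS ⟨ht₁p, lt_of_lt_of_le ht₁u (min_le_left _ _)⟩
  set t₂ : ℝ := (max l t₁ + q) / 2 with ht₂def
  have hmax : max l t₁ < q := max_lt hl ht₁q
  have ht₂q : t₂ < q := by rw [ht₂def]; linarith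
  have ht₂l : max l t₁ < t₂ := by rw [ht₂def]; linarith
  have ht₁t₂ : t₁ < t₂ := lt_of_le_of_lt (le_max_right _ _) ht₂l
  have hft₂ : c < f t₂ := hlS ⟨lt_of_le_of_lt (le_max_left _ _) ht₂l, ht₂q⟩
  have hIcc12 : Set.Icc t₁ t₂ ⊆ Set.Ioo a b := fun t ht =>
    hsub ⟨le_trans ht₁p.le ht.1, le_trans ht.2 ht₂q.le⟩
  -- IVT: get t₀ ∈ [t₁, t₂] with f t₀ = c
  obtain ⟨t₀, ht₀mem, ht₀⟩ :=
    intermediate_value_Icc ht₁t₂.le (hcf _ hIcc12) ⟨hft₁.le, hft₂.le⟩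
  have ht₀q : t₀ < q := lt_of_le_of_lt ht₀mem.2 ht₂q
  -- least element of {t ∈ [t₁, t₀] | f t = c}
  set S : Set ℝ := Set.Icc t₁ t₀ ∩ f ⁻¹' {c} with hSdef
  have hScl : IsClosed S := by
    apply ContinuousOn.preimage_isClosed_of_isClosed
      (hcf _ (fun t ht => hIcc12 ⟨ht.1, le_trans ht.2 ht₀mem.2⟩)) isClosed_Icc
      isClosed_singleton
  have hScomp : IsCompact S :=
    isCompact_Icc.of_isClosed_subset hScl Set.inter_subset_left
  have hSne : S.Nonempty := ⟨t₀, ⟨⟨ht₀mem.1, le_refl _⟩, ht₀⟩⟩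
  obtain ⟨y, hyS, hyleast⟩ := hScomp.exists_isLeast hSne
  have hyc : f y = c := hyS.2
  have hpy : p < y := lt_of_lt_of_le ht₁p hyS.1.1
  have hyq : y < q := lt_of_le_of_lt hyS.1.2 ht₀q
  have hyab : y ∈ Set.Ioo a b := hsub ⟨hpy.le, hyq.le⟩
  -- on (p, y), f < c
  have hbelow : ∀ t ∈ Set.Ioo p y, f t < c := by
    intro t ht
    rcases le_or_gt t t₁ with h1 | h1
    · exact huS ⟨ht.1, lt_of_le_of_lt h1 (lt_of_lt_of_le ht₁u (min_le_left _ _))⟩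
    · by_contra hge
      push_neg at hge
      have hty : t < y := ht.2
      have hcont' : ContinuousOn f (Set.Icc t₁ t) :=
        hcf _ (fun s hs => hIcc12 ⟨hs.1, le_trans hs.2 (le_trans hty.le (le_trans hyS.1.2 ht₀mem.2))⟩)
      obtain ⟨s, hsmem, hs⟩ :=
        intermediate_value_Icc h1.le hcont' ⟨hft₁.le, hge⟩
      have hsS : s ∈ S := ⟨⟨hsmem.1, le_trans hsmem.2 (le_trans hty.le hyS.1.2)⟩, hs⟩
      have := hyleast hsS
      have : y ≤ t := le_trans this hsmem.2
      linarith
  -- f' y ≥ 0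
  refine ⟨y, ⟨hpy, hyq⟩, hyc, ?_⟩
  by_contra hneg
  push_neg at hneg
  have h2 : ∀ᶠ t in 𝓝[<] y, f y < f t := slope_pos_left (hderiv y hyab) hneg
  have h3 : Set.Ioo p y ∈ 𝓝[<] y := mem_nhdsLT_iff_exists_Ioo_subset.2 ⟨p, hpy, le_refl _⟩
  obtain ⟨t, ht1, ht2⟩ := (h2.and (eventually_of_mem h3 (fun _ h => h))).exists
  have := hbelow t ht2
  rw [hyc] at ht1
  linarith

theorem stmt_4 (f f' : ℝ → ℝ) (a b c : ℝ) (n : ℕ) (hn : 1 < n) (x : Fin n → ℝ)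
    (hderiv : ∀ t ∈ Set.Ioo a b, HasDerivAt f (f' t) t)
    (hcont : ContinuousOn f' (Set.Ioo a b))
    (hmono : StrictMono x) (hmem : ∀ i, x i ∈ Set.Ioo a b)
    (hval : ∀ i, f (x i) = c) (hneg : ∀ i, f' (x i) < 0) :
    ∃ y : Fin (n - 1) → ℝ, StrictMono y ∧
      (∀ j, y j ∈ Set.Ioo a b) ∧
      (∀ j i, y j ≠ x i) ∧
      (∀ j, f (y j) = c) ∧
      (∀ j, 0 ≤ f' (y j)) := by
  have H : ∀ j : Fin (n - 1), ∃ z,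
      z ∈ Set.Ioo (x ⟨j.1, by omega⟩) (x ⟨j.1 + 1, by omega⟩) ∧ f z = c ∧ 0 ≤ f' z := by
    intro j
    exact key hderiv (hmem _) (hmem _)
      (hmono (show (⟨j.1, by omega⟩ : Fin n) < ⟨j.1 + 1, by omega⟩ from by
        simp [Fin.lt_def]))
      (hval _) (hval _) (hneg _) (hneg _)
  choose y hy1 hy2 hy3 using H
  have hlt : ∀ j : Fin (n-1), x ⟨j.1, by omega⟩ < y j ∧ y j < x ⟨j.1 + 1, by omega⟩ :=
    fun j => ⟨(hy1 j).1, (hy1 j).2⟩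
  refine ⟨y, ?_, ?_, ?_, hy2, hy3⟩
  · intro j k hjk
    have h1 : y j < x ⟨j.1 + 1, by omega⟩ := (hlt j).2
    have h2 : x ⟨k.1, by omega⟩ < y k := (hlt k).1
    have h3 : x ⟨j.1 + 1, by omega⟩ ≤ x ⟨k.1, by omega⟩ :=
      hmono.monotone (by simp [Fin.le_def]; omega)
    linarith
  · intro j
    have h1 := (hmem ⟨j.1, by omega⟩)
    have h2 := (hmem ⟨j.1 + 1, by omega⟩)
    exact ⟨lt_trans h1.1 (hlt j).1, lt_trans (hlt j).2 h2.2⟩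
  · intro j i
    rcases le_or_gt i.1 j.1 with h | h
    · have : x i ≤ x ⟨j.1, by omega⟩ := hmono.monotone (by simp [Fin.le_def]; omega)
      exact ne_of_gt (lt_of_le_of_lt this (hlt j).1)
    · have : x ⟨j.1 + 1, by omega⟩ ≤ x i := hmono.monotone (by simp [Fin.le_def]; omega)
      exact ne_of_lt (lt_of_lt_of_le (hlt j).2 this)
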